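/- Let A = UP be the polar decomposition of A ∈ GL(n,ℝ) with det(A) > 0, and suppose all eigenvalues of U lie in the open right half-plane. If A(t) is a differentiable curve with A(0) = A and Ȧ := A'(0), and U(t) is its orthogonal polar factor with U'(0) = UΩ for Ω ∈ sk(n), then Ω satisfies the Lyapunov equation PΩ + ΩP + ȦᵀU − UᵀȦ = 0. -/

import Mathlib

set_option maxHeartbeats 1000000
open Matrix

attribute [local instance] Matrix.frobeniusNormedAddCommGroup Matrix.frobeniusNormedSpace

theorem polar_factor_derivative_lyapunov (n : ℕ)
    (A U P : ℝ → Matrix (Fin n) (Fin n) ℝ)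
    (A' : Matrix (Fin n) (Fin n) ℝ) (Ω : Matrix (Fin n) (Fin n) ℝ)
    (hpolar : ∀ t, A t = U t * P t)
    (hU : ∀ t, (U t)ᵀ * U t = 1)
    (hUdet : ∀ t, (U t).det = 1)
    (hP : ∀ t, (P t).PosDef)
    (hdet : 0 < (A 0).det)
    (hspec : ∀ lam ∈ spectrum ℂ ((U 0).map (Complex.ofReal)), 0 < lam.re)
    (hΩ : Ωᵀ = -Ω)
    (hA' : HasDerivAt A A' 0)
    (hU' : HasDerivAt U (U 0 * Ω) 0) :
    P 0 * Ω + Ω * P 0 + A'ᵀ * U 0 - (U 0)ᵀ * A' = 0 := by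
  letI : NormedRing (Matrix (Fin n) (Fin n) ℝ) := Matrix.frobeniusNormedRing
  letI : NormedAlgebra ℝ (Matrix (Fin n) (Fin n) ℝ) := Matrix.frobeniusNormedAlgebra
  -- transpose as a continuous linear map
  let T : Matrix (Fin n) (Fin n) ℝ →L[ℝ] Matrix (Fin n) (Fin n) ℝ :=
    LinearMap.toContinuousLinearMap (Matrix.transposeLinearEquiv (Fin n) (Fin n) ℝ ℝ).toLinearMap
  have hTapp : ∀ M : Matrix (Fin n) (Fin n) ℝ, T M = Mᵀ := fun _ => rfl
  have hUt : HasDerivAt (fun t => (U t)ᵀ) ((U 0 * Ω)ᵀ) 0 := by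
    exact T.hasFDerivAt.comp_hasDerivAt 0 hU'
  have hAt : HasDerivAt (fun t => (A t)ᵀ) A'ᵀ 0 := by
    exact T.hasFDerivAt.comp_hasDerivAt 0 hA'
  have h1 : HasDerivAt (fun t => (U t)ᵀ * A t) ((U 0 * Ω)ᵀ * A 0 + (U 0)ᵀ * A') 0 := hUt.mul hA'
  have h2 : HasDerivAt (fun t => (A t)ᵀ * U t) (A'ᵀ * U 0 + (A 0)ᵀ * (U 0 * Ω)) 0 := hAt.mul hU'
  have hPsymm : ∀ t, (P t)ᵀ = P t := fun t => by
    have := (hP t).isHermitian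
    simpa [Matrix.IsHermitian] using this
  have hfun : (fun t => (U t)ᵀ * A t) = (fun t => (A t)ᵀ * U t) := by
    funext t
    rw [hpolar t, Matrix.transpose_mul, hPsymm t, Matrix.mul_assoc, hU t, Matrix.mul_one,
      ← Matrix.mul_assoc, hU t, Matrix.one_mul]
  rw [hfun] at h1
  have key := h1.unique h2
  have hA0 : A 0 = U 0 * P 0 := hpolar 0
  have e1 : (U 0 * Ω)ᵀ * A 0 = -(Ω * P 0) := by
    rw [hA0, Matrix.transpose_mul, hΩ, Matrix.mul_assoc, ← Matrix.mul_assoc (U 0)ᵀ, hU 0,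
      Matrix.one_mul, Matrix.neg_mul]
  have e2 : (A 0)ᵀ * (U 0 * Ω) = P 0 * Ω := by
    rw [hA0, Matrix.transpose_mul, hPsymm 0, Matrix.mul_assoc, ← Matrix.mul_assoc (U 0)ᵀ, hU 0,
      Matrix.one_mul]
  rw [e1, e2] at key
  -- key : -(Ω * P 0) + (U 0)ᵀ * A' = A'ᵀ * U 0 + P 0 * Ω
  have key2 : (U 0)ᵀ * A' = Ω * P 0 + (A'ᵀ * U 0 + P 0 * Ω) := by
    rw [← key]; abel
  rw [key2]; abel
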